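/- arXiv:2504.04361 — 4 statements merged into one kernel-verified Lean document; each statement's English description precedes it below -/
import Mathlib

section
/- Let b₁ < d₁ ≤ b₂ < d₂ be real numbers and p ≥ 1. Then ((d₁−b₁)/2)^p + ((d₂−b₂)/2)^p ≤ (max(b₂−b₁, d₂−d₁))^p. -/
open MeasureTheory Filter

noncomputable section

lemma real_add_rpow_le_rpow_add {x y p : ℝ} (hx : 0 ≤ x) (hy : 0 ≤ y) (hp : 1 ≤ p) :
    x ^ p + y ^ p ≤ (x + y) ^ p := by
  lift x to NNReal using hx
  lift y to NNReal using hy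
  exact_mod_cast NNReal.add_rpow_le_rpow_add x y hp

theorem sum_pow_half_lifespans_le
    (b₁ d₁ b₂ d₂ : ℝ) (h₁ : b₁ < d₁) (h₂ : d₁ ≤ b₂) (h₃ : b₂ < d₂)
    (p : ℝ) (hp : 1 ≤ p) :
    ((d₁ - b₁) / 2) ^ p + ((d₂ - b₂) / 2) ^ p ≤ (max (b₂ - b₁) (d₂ - d₁)) ^ p := by
  have hx0 : (0:ℝ) ≤ (d₁ - b₁) / 2 := by linarith
  have hy0 : (0:ℝ) ≤ (d₂ - b₂) / 2 := by linarith
  have hxy : (d₁ - b₁) / 2 + (d₂ - b₂) / 2 ≤ max (b₂ - b₁) (d₂ - d₁) := by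
    have := le_max_left (b₂ - b₁) (d₂ - d₁)
    have := le_max_right (b₂ - b₁) (d₂ - d₁)
    linarith
  calc ((d₁ - b₁) / 2) ^ p + ((d₂ - b₂) / 2) ^ p
      ≤ ((d₁ - b₁) / 2 + (d₂ - b₂) / 2) ^ p := real_add_rpow_le_rpow_add hx0 hy0 hp
    _ ≤ (max (b₂ - b₁) (d₂ - d₁)) ^ p :=
        Real.rpow_le_rpow (by linarith) hxy (by linarith)
end
end

section
/- If persistence diagrams D₁ and D₂ are orthogonal (for every (b₁,d₁) ∈ D₁ and (b₂,d₂) ∈ D₂ the open intervals (b₁,d₁) and (b₂,d₂) are disjoint), then the trivial matching—pairing each point of either diagram with its closest point on the diagonal—achieves the infimum defining the bottleneck distance W_∞(D₁, D₂). -/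
open MeasureTheory Filter

noncomputable section

/-- `D` is a persistence diagram: every feature is born before it dies. -/
def IsDiagram (D : Multiset (ℝ × ℝ)) : Prop := ∀ p ∈ D, p.1 < p.2

/-- Supremum norm distance on ℝ². -/
def distSup (x y : ℝ × ℝ) : ℝ := max |x.1 - y.1| |x.2 - y.2|

/-- `M` is a matching between `D₁` and `D₂`: a bijective pairing between the
diagrams augmented with finitely many diagonal points. -/
def IsMatching (D₁ D₂ : Multiset (ℝ × ℝ)) (M : Multiset ((ℝ × ℝ) × (ℝ × ℝ))) : Prop :=
  ∃ E₁ E₂ : Multiset (ℝ × ℝ), (∀ x ∈ E₁, x.1 = x.2) ∧ (∀ y ∈ E₂, y.1 = y.2) ∧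
    M.map Prod.fst = D₁ + E₁ ∧ M.map Prod.snd = D₂ + E₂

/-- The bottleneck cost of a matching: the largest sup-norm distance within a pair. -/
def costSup (M : Multiset ((ℝ × ℝ) × (ℝ × ℝ))) : ℝ :=
  sSup (insert 0 {c | ∃ pr ∈ M, c = distSup pr.1 pr.2})

/-- Bottleneck distance between persistence diagrams. -/
def bottleneck (D₁ D₂ : Multiset (ℝ × ℝ)) : ℝ :=
  sInf {c | ∃ M, IsMatching D₁ D₂ M ∧ c = costSup M}

/-- `p`-Wasserstein distance between persistence diagrams. -/
def wasserstein (p : ℝ) (D₁ D₂ : Multiset (ℝ × ℝ)) : ℝ :=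
  sInf {c | ∃ M, IsMatching D₁ D₂ M ∧
    c = ((M.map fun pr => distSup pr.1 pr.2 ^ p).sum) ^ (1 / p)}

/-- The trivial matching: each point of either diagram is paired with its closest
diagonal point. -/
def trivMatch (D₁ D₂ : Multiset (ℝ × ℝ)) : Multiset ((ℝ × ℝ) × (ℝ × ℝ)) :=
  (D₁.map fun x => (x, ((x.1 + x.2) / 2, (x.1 + x.2) / 2))) +
  (D₂.map fun y => (((y.1 + y.2) / 2, (y.1 + y.2) / 2), y))

lemma distSup_comm (x y : ℝ × ℝ) : distSup x y = distSup y x := by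
  unfold distSup; rw [abs_sub_comm, abs_sub_comm x.2]

lemma distSup_triv (x : ℝ × ℝ) (hx : x.1 ≤ x.2) :
    distSup x ((x.1 + x.2) / 2, (x.1 + x.2) / 2) = (x.2 - x.1) / 2 := by
  unfold distSup
  rw [show x.1 - ((x.1 + x.2) / 2, (x.1 + x.2) / 2).1 = -((x.2 - x.1) / 2) by simp; ring,
    show x.2 - ((x.1 + x.2) / 2, (x.1 + x.2) / 2).2 = (x.2 - x.1) / 2 by simp; ring,
    abs_neg, max_self, abs_of_nonneg (by linarith)]

lemma key_diag (p q : ℝ × ℝ) (hq : q.1 = q.2) : (p.2 - p.1) / 2 ≤ distSup p q := by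
  have h1 : q.1 - p.1 ≤ |p.1 - q.1| := by rw [abs_sub_comm]; exact le_abs_self _
  have h2 : p.2 - q.2 ≤ |p.2 - q.2| := le_abs_self _
  have m1 := le_max_left |p.1 - q.1| |p.2 - q.2|
  have m2 := le_max_right |p.1 - q.1| |p.2 - q.2|
  unfold distSup; linarith

lemma key_sep (p q : ℝ × ℝ) (hp : p.1 < p.2) (h : p.2 ≤ q.1 ∨ q.2 ≤ p.1) :
    (p.2 - p.1) / 2 ≤ distSup p q := by
  have m1 := le_max_left |p.1 - q.1| |p.2 - q.2|
  have m2 := le_max_right |p.1 - q.1| |p.2 - q.2|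
  unfold distSup
  rcases h with h | h
  · have : q.1 - p.1 ≤ |p.1 - q.1| := by rw [abs_sub_comm]; exact le_abs_self _
    linarith
  · have : p.2 - q.2 ≤ |p.2 - q.2| := le_abs_self _
    linarith

lemma sep_of_disjoint {a b c d : ℝ} (hab : a < b) (hcd : c < d)
    (h : Set.Ioo a b ∩ Set.Ioo c d = ∅) : b ≤ c ∨ d ≤ a := by
  by_contra hc
  push_neg at hc
  obtain ⟨h1, h2⟩ := hc
  have hx : max a c < min b d := max_lt (lt_min hab h2) (lt_min h1 hcd)
  have hm1 : a ≤ max a c := le_max_left a c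
  have hm2 : c ≤ max a c := le_max_right a c
  have hm3 : min b d ≤ b := min_le_left b d
  have hm4 : min b d ≤ d := min_le_right b d
  have : (max a c + min b d) / 2 ∈ Set.Ioo a b ∩ Set.Ioo c d :=
    ⟨⟨by linarith, by linarith⟩, ⟨by linarith, by linarith⟩⟩
  rw [h] at this
  exact this

lemma bddAbove_costSet (M : Multiset ((ℝ × ℝ) × (ℝ × ℝ))) :
    BddAbove (insert (0 : ℝ) {c | ∃ pr ∈ M, c = distSup pr.1 pr.2}) := by
  have hfin : {c | ∃ pr ∈ M, c = distSup pr.1 pr.2}.Finite := by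
    have : {c | ∃ pr ∈ M, c = distSup pr.1 pr.2} =
        (fun pr : (ℝ × ℝ) × (ℝ × ℝ) => distSup pr.1 pr.2) '' (M.toFinset : Set _) := by
      ext c; simp [eq_comm]
    rw [this]
    exact (M.toFinset.finite_toSet).image _
  exact (hfin.insert 0).bddAbove

lemma le_costSup {M : Multiset ((ℝ × ℝ) × (ℝ × ℝ))} {pr : (ℝ × ℝ) × (ℝ × ℝ)}
    (h : pr ∈ M) : distSup pr.1 pr.2 ≤ costSup M :=
  le_csSup (bddAbove_costSet M) (Set.mem_insert_iff.mpr (Or.inr ⟨pr, h, rfl⟩))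

lemma costSup_nonneg (M : Multiset ((ℝ × ℝ) × (ℝ × ℝ))) : 0 ≤ costSup M :=
  le_csSup (bddAbove_costSet M) (Set.mem_insert 0 _)

lemma trivMatch_isMatching (D₁ D₂ : Multiset (ℝ × ℝ)) :
    IsMatching D₁ D₂ (trivMatch D₁ D₂) := by
  refine ⟨D₂.map fun y => ((y.1 + y.2) / 2, (y.1 + y.2) / 2),
    D₁.map fun x => ((x.1 + x.2) / 2, (x.1 + x.2) / 2), ?_, ?_, ?_, ?_⟩
  · intro x hx; obtain ⟨y, _, rfl⟩ := Multiset.mem_map.mp hx; rfl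
  · intro y hy; obtain ⟨x, _, rfl⟩ := Multiset.mem_map.mp hy; rfl
  · simp [trivMatch, Multiset.map_map, Function.comp]
  · simp [trivMatch, Multiset.map_map, Function.comp, add_comm]

lemma costSup_trivMatch_le (D₁ D₂ : Multiset (ℝ × ℝ)) (hD₁ : IsDiagram D₁)
    (hD₂ : IsDiagram D₂)
    (horth : ∀ p₁ ∈ D₁, ∀ p₂ ∈ D₂, Set.Ioo p₁.1 p₁.2 ∩ Set.Ioo p₂.1 p₂.2 = ∅)
    (M : Multiset ((ℝ × ℝ) × (ℝ × ℝ))) (hM : IsMatching D₁ D₂ M) :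
    costSup (trivMatch D₁ D₂) ≤ costSup M := by
  obtain ⟨E₁, E₂, hE₁, hE₂, hM1, hM2⟩ := hM
  apply csSup_le ⟨0, Set.mem_insert 0 _⟩
  rintro c hc
  rcases Set.mem_insert_iff.mp hc with rfl | ⟨pr, hpr, rfl⟩
  · exact costSup_nonneg M
  rcases Multiset.mem_add.mp hpr with hpr | hpr
  · -- pr = (x, mid x) with x ∈ D₁
    obtain ⟨x, hx, rfl⟩ := Multiset.mem_map.mp hpr
    have hxlt := hD₁ x hx
    rw [show ((x, ((x.1 + x.2) / 2, (x.1 + x.2) / 2)) :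
        (ℝ × ℝ) × (ℝ × ℝ)).1 = x from rfl]
    rw [distSup_triv x hxlt.le]
    -- find the partner of x in M
    have hxm : x ∈ M.map Prod.fst := by rw [hM1]; exact Multiset.mem_add.mpr (Or.inl hx)
    obtain ⟨pr', hpr', hfst⟩ := Multiset.mem_map.mp hxm
    have hsnd : pr'.2 ∈ D₂ + E₂ := by
      rw [← hM2]; exact Multiset.mem_map_of_mem _ hpr'
    have hle : (x.2 - x.1) / 2 ≤ distSup pr'.1 pr'.2 := by
      rw [hfst]
      rcases Multiset.mem_add.mp hsnd with h2 | h2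
      · exact key_sep x pr'.2 hxlt
          (sep_of_disjoint hxlt (hD₂ _ h2) (horth x hx pr'.2 h2))
      · exact key_diag x pr'.2 (hE₂ _ h2)
    exact hle.trans (le_costSup hpr')
  · -- pr = (mid y, y) with y ∈ D₂
    obtain ⟨y, hy, rfl⟩ := Multiset.mem_map.mp hpr
    have hylt := hD₂ y hy
    rw [show distSup ((((y.1 + y.2) / 2, (y.1 + y.2) / 2), y) :
        (ℝ × ℝ) × (ℝ × ℝ)).1 ((((y.1 + y.2) / 2, (y.1 + y.2) / 2), y) :
        (ℝ × ℝ) × (ℝ × ℝ)).2 = distSup y ((y.1 + y.2) / 2, (y.1 + y.2) / 2) from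
        distSup_comm _ _]
    rw [distSup_triv y hylt.le]
    have hym : y ∈ M.map Prod.snd := by rw [hM2]; exact Multiset.mem_add.mpr (Or.inl hy)
    obtain ⟨pr', hpr', hsnd⟩ := Multiset.mem_map.mp hym
    have hfst : pr'.1 ∈ D₁ + E₁ := by
      rw [← hM1]; exact Multiset.mem_map_of_mem _ hpr'
    have hle : (y.2 - y.1) / 2 ≤ distSup pr'.1 pr'.2 := by
      rw [distSup_comm, hsnd]
      rcases Multiset.mem_add.mp hfst with h1 | h1
      · refine key_sep y pr'.1 hylt ?_
        exact (sep_of_disjoint (hD₁ _ h1) hylt (horth pr'.1 h1 y hy)).symm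
      · exact key_diag y pr'.1 (hE₁ _ h1)
    exact hle.trans (le_costSup hpr')

theorem trivMatch_perfect_of_orthogonal
    (D₁ D₂ : Multiset (ℝ × ℝ)) (hD₁ : IsDiagram D₁) (hD₂ : IsDiagram D₂)
    (horth : ∀ p₁ ∈ D₁, ∀ p₂ ∈ D₂, Set.Ioo p₁.1 p₁.2 ∩ Set.Ioo p₂.1 p₂.2 = ∅) :
    IsMatching D₁ D₂ (trivMatch D₁ D₂) ∧
      costSup (trivMatch D₁ D₂) = bottleneck D₁ D₂ := by
  have hmatch := trivMatch_isMatching D₁ D₂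
  refine ⟨hmatch, le_antisymm ?_ ?_⟩
  · refine le_csInf ⟨costSup (trivMatch D₁ D₂), trivMatch D₁ D₂, hmatch, rfl⟩ ?_
    rintro c ⟨M, hM, rfl⟩
    exact costSup_trivMatch_le D₁ D₂ hD₁ hD₂ horth M hM
  · refine csInf_le ?_ ⟨trivMatch D₁ D₂, hmatch, rfl⟩
    refine ⟨costSup (trivMatch D₁ D₂), ?_⟩
    rintro c ⟨M, hM, rfl⟩
    exact costSup_trivMatch_le D₁ D₂ hD₁ hD₂ horth M hM
end
end

section
/- If persistence diagrams D₁ and D₂ are orthogonal, then for p ≥ 1 the p-Wasserstein distance satisfies W_p(D₁, D₂)^p = W_p(D₁, ∅)^p + W_p(D₂, ∅)^p. -/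
open MeasureTheory Filter

noncomputable section

/-! ### Auxiliary lemmas -/

/-- The `p`-th power total persistence of a diagram. -/
def Spow (p : ℝ) (D : Multiset (ℝ × ℝ)) : ℝ :=
  (D.map fun x => ((x.2 - x.1) / 2) ^ p).sum

lemma Spow_nonneg (p : ℝ) (D : Multiset (ℝ × ℝ)) (hD : IsDiagram D) : 0 ≤ Spow p D := by
  refine Multiset.sum_nonneg ?_
  intro a ha
  obtain ⟨x, hx, rfl⟩ := Multiset.mem_map.1 ha
  exact Real.rpow_nonneg (by have := hD x hx; linarith) _

lemma distSup_eq (x y : ℝ × ℝ) : distSup x y = max |x.1 - y.1| |x.2 - y.2| := rfl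

lemma distSup_nonneg (x y : ℝ × ℝ) : 0 ≤ distSup x y :=
  le_trans (abs_nonneg _) (le_max_left _ _)

lemma distSup_mid_right (x : ℝ × ℝ) (h : x.1 < x.2) :
    distSup x ((x.1 + x.2) / 2, (x.1 + x.2) / 2) = (x.2 - x.1) / 2 := by
  rw [distSup_eq]
  dsimp only
  rw [show x.1 - (x.1 + x.2) / 2 = -((x.2 - x.1) / 2) by ring,
    show x.2 - (x.1 + x.2) / 2 = (x.2 - x.1) / 2 by ring, abs_neg,
    abs_of_nonneg (by linarith), max_self]

lemma distSup_mid_left (y : ℝ × ℝ) (h : y.1 < y.2) :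
    distSup ((y.1 + y.2) / 2, (y.1 + y.2) / 2) y = (y.2 - y.1) / 2 := by
  rw [distSup_eq]
  dsimp only
  rw [show (y.1 + y.2) / 2 - y.1 = (y.2 - y.1) / 2 by ring,
    show (y.1 + y.2) / 2 - y.2 = -((y.2 - y.1) / 2) by ring, abs_neg,
    abs_of_nonneg (by linarith), max_self]

lemma half_le_distSup_diag_right (x : ℝ × ℝ) (t : ℝ) :
    (x.2 - x.1) / 2 ≤ distSup x (t, t) := by
  have h1 : t - x.1 ≤ |x.1 - t| := by rw [abs_sub_comm]; exact le_abs_self _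
  have h2 : x.2 - t ≤ |x.2 - t| := le_abs_self _
  have h3 : |x.1 - t| ≤ distSup x (t, t) := le_max_left _ _
  have h4 : |x.2 - t| ≤ distSup x (t, t) := le_max_right _ _
  linarith

lemma half_le_distSup_diag_left (y : ℝ × ℝ) (t : ℝ) :
    (y.2 - y.1) / 2 ≤ distSup (t, t) y := by
  have h1 : y.2 - t ≤ |t - y.2| := by rw [abs_sub_comm]; exact le_abs_self _
  have h2 : t - y.1 ≤ |t - y.1| := le_abs_self _
  have h3 : |t - y.1| ≤ distSup (t, t) y := le_max_left _ _
  have h4 : |t - y.2| ≤ distSup (t, t) y := le_max_right _ _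
  linarith

lemma halves_le_distSup_of_disjoint (x y : ℝ × ℝ) (hx : x.1 < x.2) (hy : y.1 < y.2)
    (h : Set.Ioo x.1 x.2 ∩ Set.Ioo y.1 y.2 = ∅) :
    (x.2 - x.1) / 2 + (y.2 - y.1) / 2 ≤ distSup x y := by
  have hA : |x.1 - y.1| ≤ distSup x y := le_max_left _ _
  have hB : |x.2 - y.2| ≤ distSup x y := le_max_right _ _
  have hcase : x.2 ≤ y.1 ∨ y.2 ≤ x.1 := by
    by_contra hc
    push_neg at hc
    obtain ⟨h1, h2⟩ := hc
    have hab : max x.1 y.1 < min x.2 y.2 := max_lt (lt_min hx h2) (lt_min h1 hy)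
    set z := (max x.1 y.1 + min x.2 y.2) / 2 with hz
    have hz1 : max x.1 y.1 < z := by rw [hz]; linarith
    have hz2 : z < min x.2 y.2 := by rw [hz]; linarith
    have hzmem : z ∈ Set.Ioo x.1 x.2 ∩ Set.Ioo y.1 y.2 := by
      constructor
      · exact ⟨lt_of_le_of_lt (le_max_left _ _) hz1, lt_of_lt_of_le hz2 (min_le_left _ _)⟩
      · exact ⟨lt_of_le_of_lt (le_max_right _ _) hz1, lt_of_lt_of_le hz2 (min_le_right _ _)⟩
    rw [h] at hzmem
    exact hzmem
  rcases hcase with hc | hc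
  · have h1 : y.1 - x.1 ≤ |x.1 - y.1| := by rw [abs_sub_comm]; exact le_abs_self _
    have h2 : y.2 - x.2 ≤ |x.2 - y.2| := by rw [abs_sub_comm]; exact le_abs_self _
    linarith
  · have h1 : x.1 - y.1 ≤ |x.1 - y.1| := le_abs_self _
    have h2 : x.2 - y.2 ≤ |x.2 - y.2| := le_abs_self _
    linarith

lemma rpow_add_rpow_le (a b p : ℝ) (ha : 0 ≤ a) (hb : 0 ≤ b) (hp : 1 ≤ p) :
    a ^ p + b ^ p ≤ (a + b) ^ p := by
  have h := NNReal.add_rpow_le_rpow_add a.toNNReal b.toNNReal hp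
  have h' := NNReal.coe_le_coe.2 h
  rw [NNReal.coe_add, NNReal.coe_rpow, NNReal.coe_rpow, NNReal.coe_rpow,
    NNReal.coe_add, Real.coe_toNNReal a ha, Real.coe_toNNReal b hb] at h'
  exact h'

/-- The cost of any matching is bounded below by the total persistence. -/
lemma cost_ge (p : ℝ) (hp : 1 ≤ p) (D₁ D₂ : Multiset (ℝ × ℝ))
    (hD₁ : IsDiagram D₁) (hD₂ : IsDiagram D₂)
    (horth : ∀ p₁ ∈ D₁, ∀ p₂ ∈ D₂, Set.Ioo p₁.1 p₁.2 ∩ Set.Ioo p₂.1 p₂.2 = ∅)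
    (M : Multiset ((ℝ × ℝ) × (ℝ × ℝ))) (hM : IsMatching D₁ D₂ M) :
    Spow p D₁ + Spow p D₂ ≤ (M.map fun pr => distSup pr.1 pr.2 ^ p).sum := by
  have hp0 : (0 : ℝ) < p := lt_of_lt_of_le one_pos hp
  obtain ⟨E₁, E₂, hE₁, hE₂, hM1, hM2⟩ := hM
  set g : ℝ × ℝ → ℝ := fun x => (max (x.2 - x.1) 0 / 2) ^ p with hg
  have hgdiag : ∀ x : ℝ × ℝ, x.1 = x.2 → g x = 0 := by
    intro x hx
    rw [hg]
    dsimp only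
    rw [hx, sub_self, max_self, zero_div, Real.zero_rpow hp0.ne']
  have hgpos : ∀ x : ℝ × ℝ, x.1 < x.2 → g x = ((x.2 - x.1) / 2) ^ p := by
    intro x hx
    rw [hg]
    dsimp only
    rw [max_eq_left (by linarith)]
  have key : ∀ pr ∈ M, g pr.1 + g pr.2 ≤ distSup pr.1 pr.2 ^ p := by
    intro pr hpr
    have h1 : pr.1 ∈ D₁ + E₁ := by
      rw [← hM1]; exact Multiset.mem_map_of_mem _ hpr
    have h2 : pr.2 ∈ D₂ + E₂ := by
      rw [← hM2]; exact Multiset.mem_map_of_mem _ hpr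
    rcases Multiset.mem_add.1 h1 with hx | hx <;> rcases Multiset.mem_add.1 h2 with hy | hy
    · -- both diagram points
      have hxlt := hD₁ _ hx
      have hylt := hD₂ _ hy
      rw [hgpos _ hxlt, hgpos _ hylt]
      have hd := halves_le_distSup_of_disjoint pr.1 pr.2 hxlt hylt (horth _ hx _ hy)
      calc ((pr.1.2 - pr.1.1) / 2) ^ p + ((pr.2.2 - pr.2.1) / 2) ^ p
          ≤ ((pr.1.2 - pr.1.1) / 2 + (pr.2.2 - pr.2.1) / 2) ^ p :=
            rpow_add_rpow_le _ _ _ (by linarith) (by linarith) hp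
        _ ≤ distSup pr.1 pr.2 ^ p :=
            Real.rpow_le_rpow (by linarith) hd hp0.le
    · -- pr.1 diagram, pr.2 diagonal
      have hxlt := hD₁ _ hx
      have hyd := hE₂ _ hy
      rw [hgpos _ hxlt, hgdiag _ hyd, add_zero]
      have : distSup pr.1 (pr.2.1, pr.2.1) = distSup pr.1 pr.2 := by
        simp [distSup_eq, ← hyd]
      rw [← this]
      exact Real.rpow_le_rpow (by linarith) (half_le_distSup_diag_right _ _) hp0.le
    · -- pr.1 diagonal, pr.2 diagram
      have hxd := hE₁ _ hx
      have hylt := hD₂ _ hy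
      rw [hgdiag _ hxd, hgpos _ hylt, zero_add]
      have : distSup (pr.1.1, pr.1.1) pr.2 = distSup pr.1 pr.2 := by
        simp [distSup_eq, ← hxd]
      rw [← this]
      exact Real.rpow_le_rpow (by linarith) (half_le_distSup_diag_left _ _) hp0.le
    · -- both diagonal
      rw [hgdiag _ (hE₁ _ hx), hgdiag _ (hE₂ _ hy), add_zero]
      exact Real.rpow_nonneg (distSup_nonneg _ _) _
  have hsum : (M.map fun pr => g pr.1 + g pr.2).sum ≤
      (M.map fun pr => distSup pr.1 pr.2 ^ p).sum :=
    Multiset.sum_map_le_sum_map _ _ key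
  have hsplit : (M.map fun pr => g pr.1 + g pr.2).sum =
      ((D₁ + E₁).map g).sum + ((D₂ + E₂).map g).sum := by
    rw [Multiset.sum_map_add, ← hM1, ← hM2, Multiset.map_map, Multiset.map_map]
    rfl
  have hDpart : ∀ (D E : Multiset (ℝ × ℝ)), IsDiagram D → (∀ x ∈ E, x.1 = x.2) →
      ((D + E).map g).sum = Spow p D := by
    intro D E hD hE
    rw [Multiset.map_add, Multiset.sum_add]
    have hD' : (D.map g).sum = Spow p D := by
      unfold Spow
      congr 1
      exact Multiset.map_congr rfl fun x hx => hgpos x (hD x hx)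
    have hE' : (E.map g).sum = 0 := by
      rw [Multiset.sum_eq_zero]
      intro a ha
      obtain ⟨x, hx, rfl⟩ := Multiset.mem_map.1 ha
      exact hgdiag x (hE x hx)
    rw [hD', hE', add_zero]
  calc Spow p D₁ + Spow p D₂
      = (M.map fun pr => g pr.1 + g pr.2).sum := by
        rw [hsplit, hDpart D₁ E₁ hD₁ hE₁, hDpart D₂ E₂ hD₂ hE₂]
    _ ≤ _ := hsum

lemma trivMatch_cost (p : ℝ) (D₁ D₂ : Multiset (ℝ × ℝ))
    (hD₁ : IsDiagram D₁) (hD₂ : IsDiagram D₂) :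
    ((trivMatch D₁ D₂).map fun pr => distSup pr.1 pr.2 ^ p).sum = Spow p D₁ + Spow p D₂ := by
  unfold trivMatch Spow
  rw [Multiset.map_add, Multiset.sum_add, Multiset.map_map, Multiset.map_map]
  congr 1
  · exact congrArg Multiset.sum (Multiset.map_congr rfl fun x hx => by
      simp only [Function.comp_apply]
      rw [distSup_mid_right x (hD₁ x hx)])
  · exact congrArg Multiset.sum (Multiset.map_congr rfl fun y hy => by
      simp only [Function.comp_apply]
      rw [distSup_mid_left y (hD₂ y hy)])

/-- The master computation of the Wasserstein distance. -/
lemma wasserstein_eq (p : ℝ) (hp : 1 ≤ p) (D₁ D₂ : Multiset (ℝ × ℝ))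
    (hD₁ : IsDiagram D₁) (hD₂ : IsDiagram D₂)
    (horth : ∀ p₁ ∈ D₁, ∀ p₂ ∈ D₂, Set.Ioo p₁.1 p₁.2 ∩ Set.Ioo p₂.1 p₂.2 = ∅) :
    wasserstein p D₁ D₂ = (Spow p D₁ + Spow p D₂) ^ (1 / p) := by
  have hp0 : (0 : ℝ) < p := lt_of_lt_of_le one_pos hp
  have hS : 0 ≤ Spow p D₁ + Spow p D₂ :=
    add_nonneg (Spow_nonneg p D₁ hD₁) (Spow_nonneg p D₂ hD₂)
  have hmem : (Spow p D₁ + Spow p D₂) ^ (1 / p) ∈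
      {c | ∃ M, IsMatching D₁ D₂ M ∧
        c = ((M.map fun pr => distSup pr.1 pr.2 ^ p).sum) ^ (1 / p)} :=
    ⟨trivMatch D₁ D₂, trivMatch_isMatching D₁ D₂, by
      rw [trivMatch_cost p D₁ D₂ hD₁ hD₂]⟩
  have hlb : ∀ c ∈ {c | ∃ M, IsMatching D₁ D₂ M ∧
      c = ((M.map fun pr => distSup pr.1 pr.2 ^ p).sum) ^ (1 / p)},
      (Spow p D₁ + Spow p D₂) ^ (1 / p) ≤ c := by
    rintro c ⟨M, hM, rfl⟩
    exact Real.rpow_le_rpow hS (cost_ge p hp D₁ D₂ hD₁ hD₂ horth M hM)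
      (by positivity)
  unfold wasserstein
  exact le_antisymm (csInf_le ⟨_, hlb⟩ hmem) (le_csInf ⟨_, hmem⟩ hlb)

theorem wasserstein_pow_of_orthogonal
    (D₁ D₂ : Multiset (ℝ × ℝ)) (hD₁ : IsDiagram D₁) (hD₂ : IsDiagram D₂)
    (horth : ∀ p₁ ∈ D₁, ∀ p₂ ∈ D₂, Set.Ioo p₁.1 p₁.2 ∩ Set.Ioo p₂.1 p₂.2 = ∅)
    (p : ℝ) (hp : 1 ≤ p) :
    wasserstein p D₁ D₂ ^ p = wasserstein p D₁ 0 ^ p + wasserstein p D₂ 0 ^ p := by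
  have hp0 : (0 : ℝ) < p := lt_of_lt_of_le one_pos hp
  have hzero : IsDiagram (0 : Multiset (ℝ × ℝ)) := by
    intro q hq; simp at hq
  have horth0 : ∀ D : Multiset (ℝ × ℝ),
      ∀ p₁ ∈ D, ∀ p₂ ∈ (0 : Multiset (ℝ × ℝ)), Set.Ioo p₁.1 p₁.2 ∩ Set.Ioo p₂.1 p₂.2 = ∅ := by
    intro D p₁ _ p₂ hp₂; simp at hp₂
  have hS₁ := Spow_nonneg p D₁ hD₁
  have hS₂ := Spow_nonneg p D₂ hD₂
  have hS0 : Spow p (0 : Multiset (ℝ × ℝ)) = 0 := by simp [Spow]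
  have hcancel : ∀ S : ℝ, 0 ≤ S → (S ^ (1 / p)) ^ p = S := by
    intro S hSn
    rw [← Real.rpow_mul hSn, one_div_mul_cancel hp0.ne', Real.rpow_one]
  rw [wasserstein_eq p hp D₁ D₂ hD₁ hD₂ horth,
    wasserstein_eq p hp D₁ 0 hD₁ hzero (horth0 D₁),
    wasserstein_eq p hp D₂ 0 hD₂ hzero (horth0 D₂), hS0]
  simp only [add_zero]
  rw [hcancel _ (add_nonneg hS₁ hS₂), hcancel _ hS₁, hcancel _ hS₂]
end
end

section
/- Two non-empty persistence diagrams D₁ and D₂ satisfy ς(D₁, D₂) = 1 if and only if D₁ = D₂, where ς is the landscape cosine similarity. -/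
open MeasureTheory Filter

noncomputable section

/-- Tent function of a feature `(b, d)`. -/
def tent (b d t : ℝ) : ℝ := max 0 (min (t - b) (d - t))

/-- The `j`-th layer (0-indexed) of the persistence landscape of the diagram `D`:
the `j`-th maximum of the tent functions of the features of `D`. -/
def landscape (D : Multiset (ℝ × ℝ)) (j : ℕ) (t : ℝ) : ℝ :=
  (((D.map fun p => tent p.1 p.2 t).sort (· ≤ ·)).reverse).getD j 0

/-- Inner product of two persistence landscapes. -/
def landInner (f g : ℕ → ℝ → ℝ) : ℝ := ∑' j : ℕ, ∫ t : ℝ, f j t * g j t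

/-- 2-norm of a persistence landscape. -/
def landNorm (f : ℕ → ℝ → ℝ) : ℝ := Real.sqrt (landInner f f)

/-- Landscape cosine similarity of persistence diagrams. -/
def cosSim (D₁ D₂ : Multiset (ℝ × ℝ)) : ℝ :=
  landInner (landscape D₁) (landscape D₂) /
    (landNorm (landscape D₁) * landNorm (landscape D₂))

namespace LandAux

open List Classical

/-! ### Basic facts about tents -/

lemma tent_nonneg (b d t : ℝ) : 0 ≤ tent b d t := le_max_left _ _

lemma tent_lipschitz (b d s t : ℝ) : |tent b d s - tent b d t| ≤ |s - t| := by
  unfold tent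
  refine le_trans (abs_max_sub_max_le_max _ _ _ _) ?_
  simp only [sub_self, abs_zero]
  refine max_le (by positivity) ?_
  refine le_trans (abs_min_sub_min_le_max _ _ _ _) ?_
  refine max_le (le_of_eq (by congr 1; ring)) (le_of_eq ?_)
  rw [show d - s - (d - t) = -(s - t) by ring, abs_neg]

lemma tent_zero_left {b d t : ℝ} (h : t ≤ b) : tent b d t = 0 := by
  unfold tent
  rw [max_eq_left]
  exact le_trans (min_le_left _ _) (by linarith)

lemma tent_zero_right {b d t : ℝ} (h : d ≤ t) : tent b d t = 0 := by
  unfold tent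
  rw [max_eq_left]
  exact le_trans (min_le_right _ _) (by linarith)

/-! ### The sorted list of tent values -/

def vals (D : Multiset (ℝ × ℝ)) (t : ℝ) : Multiset ℝ := D.map fun p => tent p.1 p.2 t

def lst (D : Multiset (ℝ × ℝ)) (t : ℝ) : List ℝ := ((vals D t).sort (· ≤ ·)).reverse

lemma landscape_eq (D : Multiset (ℝ × ℝ)) (j : ℕ) (t : ℝ) :
    landscape D j t = (lst D t).getD j 0 := rfl

lemma lst_sorted (D : Multiset (ℝ × ℝ)) (t : ℝ) :
    (lst D t).Pairwise (fun a b => b ≤ a) := by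
  have := Multiset.pairwise_sort (vals D t) (· ≤ ·)
  unfold lst
  rw [List.pairwise_reverse]
  exact this

lemma lst_coe (D : Multiset (ℝ × ℝ)) (t : ℝ) : (↑(lst D t) : Multiset ℝ) = vals D t := by
  unfold lst
  rw [Multiset.coe_reverse, Multiset.sort_eq]

lemma lst_length (D : Multiset (ℝ × ℝ)) (t : ℝ) :
    (lst D t).length = Multiset.card D := by
  have : (lst D t).length = Multiset.card (↑(lst D t) : Multiset ℝ) := rfl
  rw [this, lst_coe]
  simp [vals]

lemma mem_lst {D : Multiset (ℝ × ℝ)} {t x : ℝ} :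
    x ∈ lst D t ↔ x ∈ vals D t := by
  rw [← lst_coe D t]; exact (Multiset.mem_coe).symm

/-! ### Counting lemmas for descending sorted lists -/

lemma drop_le {l : List ℝ} {j : ℕ} (hl : l.Pairwise (fun a b => b ≤ a)) (hj : j < l.length) :
    ∀ y ∈ l.drop j, y ≤ l[j] := by
  intro y hy
  have hdrop : l.drop j = l[j] :: l.drop (j + 1) := List.drop_eq_getElem_cons hj
  have hsorted : (l.drop j).Pairwise (fun a b => b ≤ a) := hl.sublist (List.drop_sublist j l)
  rw [hdrop] at hy hsorted
  rcases List.mem_cons.1 hy with rfl | hy'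
  · exact le_rfl
  · exact List.rel_of_pairwise_cons hsorted hy'

lemma get_anti {l : List ℝ} {j : ℕ} (hl : l.Pairwise (fun a b => b ≤ a)) {i : ℕ}
    (hij : i ≤ j) (hj : j < l.length) : l[j] ≤ l[i]'(by omega) := by
  rcases Nat.lt_or_ge i j with h | h
  · have := hl.rel_get_of_lt (a := ⟨i, by omega⟩) (b := ⟨j, hj⟩) (by exact h)
    simpa using this
  · have : i = j := by omega
    subst this; exact le_rfl

lemma countP_ge {l : List ℝ} {j : ℕ} {w : ℝ} (hl : l.Pairwise (fun a b => b ≤ a))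
    (hj : j < l.length) (hw : w ≤ l[j]) :
    j + 1 ≤ Multiset.countP (fun y => w ≤ y) ↑l := by
  have hle : ((l.take (j+1) : List ℝ) : Multiset ℝ) ≤ ↑l :=
    Multiset.coe_le.2 (List.take_sublist _ _).subperm
  have hall : ∀ y ∈ (↑(l.take (j+1)) : Multiset ℝ), w ≤ y := by
    intro y hy
    rw [Multiset.mem_coe, List.mem_iff_getElem] at hy
    obtain ⟨i, hi, rfl⟩ := hy
    have hi' : i < j + 1 := lt_of_lt_of_le hi (by simp [List.length_take])
    rw [List.getElem_take]
    exact le_trans hw (get_anti hl (by omega) hj)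
  have hcard : Multiset.countP (fun y => w ≤ y) ↑(l.take (j+1)) = j + 1 := by
    rw [Multiset.countP_eq_card.2 hall]
    simp only [Multiset.coe_card, List.length_take]
    omega
  calc j + 1 = _ := hcard.symm
    _ ≤ _ := Multiset.countP_le_of_le _ hle

lemma getD_ge {l : List ℝ} {j : ℕ} {w : ℝ} (hl : l.Pairwise (fun a b => b ≤ a))
    (h : j + 1 ≤ Multiset.countP (fun y => w ≤ y) ↑l) : w ≤ l.getD j 0 := by
  have hj : j < l.length := by
    have h2 := le_trans h (Multiset.countP_le_card _ _)
    simp only [Multiset.coe_card] at h2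
    omega
  rw [List.getD_eq_getElem _ _ hj]
  by_contra hlt
  push_neg at hlt
  have hsplit : (↑l : Multiset ℝ) = ↑(l.take j) + ↑(l.drop j) := by
    conv_lhs => rw [← List.take_append_drop j l]
    rw [← Multiset.coe_add]
  have h1 : Multiset.countP (fun y => w ≤ y) ↑(l.take j) ≤ j := by
    refine le_trans (Multiset.countP_le_card _ _) ?_
    simp [List.length_take]
  have h2 : Multiset.countP (fun y => w ≤ y) ↑(l.drop j) = 0 := by
    rw [Multiset.countP_eq_zero]
    intro y hy
    have := drop_le hl hj y (Multiset.mem_coe.1 hy)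
    push_neg
    exact lt_of_le_of_lt this hlt
  rw [hsplit, Multiset.countP_add, h2] at h
  omega

lemma getD_iff {l : List ℝ} {j : ℕ} {w : ℝ} (hl : l.Pairwise (fun a b => b ≤ a)) (hw : 0 < w) :
    w ≤ l.getD j 0 ↔ j < Multiset.countP (fun y => w ≤ y) ↑l := by
  constructor
  · intro h
    rcases Nat.lt_or_ge j l.length with hj | hj
    · rw [List.getD_eq_getElem _ _ hj] at h
      exact countP_ge hl hj h
    · rw [List.getD_eq_default _ _ hj] at h
      linarith
  · intro h
    exact getD_ge hl h

lemma countP_mono {α : Type*} {s : Multiset α} {p q : α → Prop} [DecidablePred p]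
    [DecidablePred q] (h : ∀ a ∈ s, p a → q a) : s.countP p ≤ s.countP q := by
  induction s using Multiset.induction_on with
  | empty => simp
  | cons a t ih =>
    rw [Multiset.countP_cons, Multiset.countP_cons]
    have ht := ih (fun x hx => h x (Multiset.mem_cons_of_mem hx))
    by_cases hp : p a
    · simp [hp, h a (Multiset.mem_cons_self a t) hp]; omega
    · simp [hp]; split <;> omega

/-! ### Basic properties of the landscape -/

lemma landscape_nonneg (D : Multiset (ℝ × ℝ)) (j : ℕ) (t : ℝ) : 0 ≤ landscape D j t := by
  rw [landscape_eq]
  rcases Nat.lt_or_ge j (lst D t).length with hj | hj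
  · rw [List.getD_eq_getElem _ _ hj]
    have hm : (lst D t)[j] ∈ lst D t := List.getElem_mem _
    rw [mem_lst] at hm
    obtain ⟨p, _, hpe⟩ := Multiset.mem_map.1 hm
    rw [← hpe]
    exact tent_nonneg _ _ _
  · rw [List.getD_eq_default _ _ hj]

lemma landscape_eq_zero_of_card {D : Multiset (ℝ × ℝ)} {j : ℕ} (t : ℝ)
    (h : Multiset.card D ≤ j) : landscape D j t = 0 := by
  rw [landscape_eq, List.getD_eq_default]
  rw [lst_length]; exact h

lemma landscape_zero_of_vals (D : Multiset (ℝ × ℝ)) (j : ℕ) (t : ℝ)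
    (h : ∀ x ∈ vals D t, x = 0) : landscape D j t = 0 := by
  rw [landscape_eq]
  rcases Nat.lt_or_ge j (lst D t).length with hj | hj
  · rw [List.getD_eq_getElem _ _ hj]
    exact h _ (mem_lst.1 (List.getElem_mem _))
  · rw [List.getD_eq_default _ _ hj]

lemma tent_le_land0 {D : Multiset (ℝ × ℝ)} {p : ℝ × ℝ} (hp : p ∈ D) (t : ℝ) :
    tent p.1 p.2 t ≤ landscape D 0 t := by
  rw [landscape_eq]
  refine getD_ge (lst_sorted D t) ?_
  rw [lst_coe]
  have : 0 < Multiset.countP (fun y => tent p.1 p.2 t ≤ y) (vals D t) :=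
    Multiset.countP_pos.2 ⟨tent p.1 p.2 t, Multiset.mem_map_of_mem _ hp, le_rfl⟩
  omega

lemma landscape_lipschitz_one_sided (D : Multiset (ℝ × ℝ)) (j : ℕ) (s t : ℝ) :
    landscape D j s ≤ landscape D j t + |s - t| := by
  rcases Nat.lt_or_ge j (Multiset.card D) with hj | hj
  · have hj' : j < (lst D s).length := by rw [lst_length]; exact hj
    set x := landscape D j s with hx
    have hx' : x = (lst D s)[j] := by rw [hx, landscape_eq, List.getD_eq_getElem _ _ hj']
    have h1 : j + 1 ≤ Multiset.countP (fun y => x ≤ y) (vals D s) := by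
      rw [← lst_coe D s]
      exact countP_ge (lst_sorted D s) hj' (le_of_eq hx')
    have h2 : j + 1 ≤ Multiset.countP (fun y => x - |s - t| ≤ y) (vals D t) := by
      refine le_trans h1 ?_
      unfold vals
      rw [Multiset.countP_map, Multiset.countP_map, ← Multiset.countP_eq_card_filter,
        ← Multiset.countP_eq_card_filter]
      refine countP_mono ?_
      intro p _ hps
      have := tent_lipschitz p.1 p.2 s t
      have h4 : tent p.1 p.2 s - tent p.1 p.2 t ≤ |s - t| := le_trans (le_abs_self _) this
      linarith
    have h3 : x - |s - t| ≤ landscape D j t := by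
      rw [landscape_eq]
      refine getD_ge (lst_sorted D t) ?_
      rw [lst_coe]; exact h2
    linarith
  · rw [landscape_eq_zero_of_card s hj]
    have := landscape_nonneg D j t
    positivity

lemma landscape_lipschitz (D : Multiset (ℝ × ℝ)) (j : ℕ) (s t : ℝ) :
    |landscape D j s - landscape D j t| ≤ |s - t| := by
  rw [abs_sub_le_iff]
  constructor
  · have := landscape_lipschitz_one_sided D j s t; linarith
  · have := landscape_lipschitz_one_sided D j t s
    rw [abs_sub_comm] at this; linarith

lemma landscape_continuous (D : Multiset (ℝ × ℝ)) (j : ℕ) :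
    Continuous (landscape D j) := by
  have : LipschitzWith 1 (landscape D j) := by
    refine LipschitzWith.of_dist_le_mul fun s t => ?_
    rw [Real.dist_eq, Real.dist_eq, NNReal.coe_one, one_mul]
    exact landscape_lipschitz D j s t
  exact this.continuous

lemma exists_bounds (D : Multiset (ℝ × ℝ)) :
    ∃ B E : ℝ, ∀ p ∈ D, B ≤ p.1 ∧ p.2 ≤ E := by
  induction D using Multiset.induction_on with
  | empty => exact ⟨0, 0, fun p hp => absurd hp (Multiset.notMem_zero p)⟩
  | cons a s ih =>
    obtain ⟨B, E, h⟩ := ih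
    refine ⟨min B a.1, max E a.2, fun p hp => ?_⟩
    rcases Multiset.mem_cons.1 hp with rfl | hp'
    · exact ⟨min_le_right _ _, le_max_right _ _⟩
    · exact ⟨le_trans (min_le_left _ _) (h p hp').1, le_trans (h p hp').2 (le_max_left _ _)⟩

lemma landscape_support {D : Multiset (ℝ × ℝ)} {B E : ℝ}
    (hBE : ∀ p ∈ D, B ≤ p.1 ∧ p.2 ≤ E) (j : ℕ) {t : ℝ} (ht : t ≤ B ∨ E ≤ t) :
    landscape D j t = 0 := by
  refine landscape_zero_of_vals D j t ?_
  intro x hx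
  obtain ⟨p, hp, rfl⟩ := Multiset.mem_map.1 hx
  rcases ht with h | h
  · exact tent_zero_left (le_trans h (hBE p hp).1)
  · exact tent_zero_right (le_trans (hBE p hp).2 h)

/-! ### Counting characterization -/

lemma filter_card_eq {D : Multiset (ℝ × ℝ)} {w : ℝ} (hw : 0 < w) {N : ℕ}
    (hN : Multiset.card D ≤ N) (t : ℝ) :
    ((Finset.range N).filter fun j => w ≤ landscape D j t).card =
      Multiset.countP (fun y => w ≤ y) (vals D t) := by
  set c := Multiset.countP (fun y => w ≤ y) (vals D t) with hc
  have hcN : c ≤ N := by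
    refine le_trans (le_trans (Multiset.countP_le_card _ _) ?_) hN
    unfold vals; rw [Multiset.card_map]
  have hiff : ∀ j, (w ≤ landscape D j t) ↔ j < c := by
    intro j
    rw [landscape_eq, getD_iff (lst_sorted D t) hw, lst_coe]
  have : ((Finset.range N).filter fun j => w ≤ landscape D j t) = Finset.range c := by
    ext j
    simp only [Finset.mem_filter, Finset.mem_range, hiff]
    omega
  rw [this, Finset.card_range]

lemma countP_tent {D : Multiset (ℝ × ℝ)} {s u : ℝ} (hsu : s < u) :
    Multiset.countP (fun y => (u - s) / 2 ≤ y) (vals D ((s + u) / 2)) =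
      Multiset.countP (fun p : ℝ × ℝ => p.1 ≤ s ∧ u ≤ p.2) D := by
  unfold vals
  rw [Multiset.countP_map, ← Multiset.countP_eq_card_filter]
  refine le_antisymm (countP_mono ?_) (countP_mono ?_) <;> intro p _ hp
  · have h1 : (u - s) / 2 ≤ min ((s + u) / 2 - p.1) (p.2 - (s + u) / 2) := by
      rcases le_max_iff.1 hp with h | h
      · linarith
      · exact h
    exact ⟨by have := le_trans h1 (min_le_left _ _); linarith,
           by have := le_trans h1 (min_le_right _ _); linarith⟩
  · refine le_trans ?_ (le_max_right _ _)
    exact le_min (by linarith [hp.1]) (by linarith [hp.2])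

/-! ### Recovering the diagram from rectangle counts -/

lemma ite_and_mul (A B : Prop) :
    ((if A ∧ B then 1 else 0) : ℕ) = (if A then 1 else 0) * (if B then 1 else 0) := by
  by_cases hA : A <;> by_cases hB : B <;> simp [hA, hB]

lemma pt_identity {b d ε : ℝ} (hε : 0 < ε) (p : ℝ × ℝ)
    (h1 : p.1 ≤ b - ε ∨ b ≤ p.1) (h2 : p.2 ≤ d ∨ d + ε ≤ p.2) :
    ((if p = (b, d) then 1 else 0) : ℕ)
      + (if p.1 ≤ b - ε ∧ d ≤ p.2 then 1 else 0)
      + (if p.1 ≤ b ∧ d + ε ≤ p.2 then 1 else 0)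
    = (if p.1 ≤ b ∧ d ≤ p.2 then 1 else 0)
      + (if p.1 ≤ b - ε ∧ d + ε ≤ p.2 then 1 else 0) := by
  have hpq : (if p = (b, d) then (1:ℕ) else 0) = if p.1 = b ∧ p.2 = d then 1 else 0 := by
    refine if_congr ?_ rfl rfl
    exact Prod.ext_iff
  have ha : (if p.1 ≤ b then (1:ℕ) else 0)
      = (if p.1 ≤ b - ε then 1 else 0) + (if p.1 = b then 1 else 0) := by
    rcases h1 with h | h
    · rw [if_pos (by linarith : p.1 ≤ b), if_pos h,
        if_neg (fun hq : p.1 = b => by rw [hq] at h; linarith)]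
    · rw [if_neg (fun hq : p.1 ≤ b - ε => by linarith), Nat.zero_add]
      exact if_congr ⟨fun hle => le_antisymm hle h, fun he => he.le⟩ rfl rfl
  have hb : (if d ≤ p.2 then (1:ℕ) else 0)
      = (if d + ε ≤ p.2 then 1 else 0) + (if p.2 = d then 1 else 0) := by
    rcases h2 with h | h
    · rw [if_neg (fun hq : d + ε ≤ p.2 => by linarith), Nat.zero_add]
      exact if_congr ⟨fun hle => le_antisymm h hle, fun he => he.ge⟩ rfl rfl
    · rw [if_pos (by linarith : d ≤ p.2), if_pos h,
        if_neg (fun hq : p.2 = d => by rw [hq] at h; linarith)]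
  rw [hpq, ite_and_mul, ite_and_mul, ite_and_mul, ite_and_mul, ite_and_mul, ha, hb]
  ring

lemma count_identity {b d ε : ℝ} (hε : 0 < ε) (D : Multiset (ℝ × ℝ))
    (hsep : ∀ p ∈ D, (p.1 ≤ b - ε ∨ b ≤ p.1) ∧ (p.2 ≤ d ∨ d + ε ≤ p.2)) :
    D.count (b, d)
      + D.countP (fun p => p.1 ≤ b - ε ∧ d ≤ p.2)
      + D.countP (fun p => p.1 ≤ b ∧ d + ε ≤ p.2)
    = D.countP (fun p => p.1 ≤ b ∧ d ≤ p.2)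
      + D.countP (fun p => p.1 ≤ b - ε ∧ d + ε ≤ p.2) := by
  induction D using Multiset.induction_on with
  | empty => simp
  | cons a s ih =>
    have hsa := hsep a (Multiset.mem_cons_self a s)
    have ihs := ih (fun p hp => hsep p (Multiset.mem_cons_of_mem hp))
    rw [Multiset.count_cons, Multiset.countP_cons, Multiset.countP_cons,
      Multiset.countP_cons, Multiset.countP_cons]
    have hpt := pt_identity hε a hsa.1 hsa.2
    have hcc : ((if (b, d) = a then 1 else 0) : ℕ) = if a = (b, d) then 1 else 0 :=
      if_congr eq_comm rfl rfl
    rw [hcc]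
    omega

lemma exists_sep (S : Multiset (ℝ × ℝ)) (b d : ℝ) :
    ∃ ε : ℝ, 0 < ε ∧ ∀ p ∈ S, (p.1 ≤ b - ε ∨ b ≤ p.1) ∧ (p.2 ≤ d ∨ d + ε ≤ p.2) := by
  induction S using Multiset.induction_on with
  | empty => exact ⟨1, one_pos, fun p hp => absurd hp (Multiset.notMem_zero p)⟩
  | cons a s ih =>
    obtain ⟨ε₀, hε₀, h⟩ := ih
    refine ⟨min ε₀ (min (if a.1 < b then b - a.1 else 1) (if d < a.2 then a.2 - d else 1)),
      ?_, ?_⟩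
    · refine lt_min hε₀ (lt_min ?_ ?_) <;> split <;> first | linarith | exact one_pos
    · intro p hp
      set ε := min ε₀ (min (if a.1 < b then b - a.1 else 1) (if d < a.2 then a.2 - d else 1))
        with hεdef
      rcases Multiset.mem_cons.1 hp with rfl | hp'
      · constructor
        · rcases lt_or_ge p.1 b with hlt | hge
          · left
            have h1 : ε ≤ b - p.1 := le_trans (min_le_right _ _)
              (le_trans (min_le_left _ _) (by rw [if_pos hlt]))
            linarith
          · right; exact hge
        · rcases lt_or_ge d p.2 with hlt | hge
          · right
            have h1 : ε ≤ p.2 - d := le_trans (min_le_right _ _)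
              (le_trans (min_le_right _ _) (by rw [if_pos hlt]))
            linarith
          · left; exact hge
      · have h2 := h p hp'
        have hle : ε ≤ ε₀ := min_le_left _ _
        exact ⟨h2.1.imp (fun hh => by linarith) id, h2.2.imp id (fun hh => by linarith)⟩

theorem diagrams_eq_of_countP {D₁ D₂ : Multiset (ℝ × ℝ)}
    (hD₁ : IsDiagram D₁) (hD₂ : IsDiagram D₂)
    (hcnt : ∀ s u : ℝ, s < u →
      D₁.countP (fun p => p.1 ≤ s ∧ u ≤ p.2) = D₂.countP (fun p => p.1 ≤ s ∧ u ≤ p.2)) :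
    D₁ = D₂ := by
  refine Multiset.ext.2 fun x => ?_
  rcases lt_or_ge x.1 x.2 with hbd | hbd
  · obtain ⟨ε, hε, hsep⟩ := exists_sep (D₁ + D₂) x.1 x.2
    have hsep₁ : ∀ p ∈ D₁, (p.1 ≤ x.1 - ε ∨ x.1 ≤ p.1) ∧ (p.2 ≤ x.2 ∨ x.2 + ε ≤ p.2) :=
      fun p hp => hsep p (Multiset.mem_add.2 (Or.inl hp))
    have hsep₂ : ∀ p ∈ D₂, (p.1 ≤ x.1 - ε ∨ x.1 ≤ p.1) ∧ (p.2 ≤ x.2 ∨ x.2 + ε ≤ p.2) :=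
      fun p hp => hsep p (Multiset.mem_add.2 (Or.inr hp))
    have h1 := count_identity hε D₁ hsep₁
    have h2 := count_identity hε D₂ hsep₂
    have e1 := hcnt (x.1 - ε) x.2 (by linarith)
    have e2 := hcnt x.1 (x.2 + ε) (by linarith)
    have e3 := hcnt x.1 x.2 hbd
    have e4 := hcnt (x.1 - ε) (x.2 + ε) (by linarith)
    have hx : x = (x.1, x.2) := rfl
    rw [← hx] at h1 h2
    omega
  · have c1 : D₁.count x = 0 :=
      Multiset.count_eq_zero.2 fun hm => absurd (hD₁ x hm) (not_lt.2 hbd)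
    have c2 : D₂.count x = 0 :=
      Multiset.count_eq_zero.2 fun hm => absurd (hD₂ x hm) (not_lt.2 hbd)
    rw [c1, c2]

/-- Injectivity of the persistence landscape on diagrams. -/
theorem diagrams_eq_of_landscape {D₁ D₂ : Multiset (ℝ × ℝ)}
    (hD₁ : IsDiagram D₁) (hD₂ : IsDiagram D₂)
    (h : ∀ j t, landscape D₁ j t = landscape D₂ j t) : D₁ = D₂ := by
  refine diagrams_eq_of_countP hD₁ hD₂ fun s u hsu => ?_
  set N := max (Multiset.card D₁) (Multiset.card D₂) with hN
  have hw : 0 < (u - s) / 2 := by linarith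
  calc D₁.countP (fun p => p.1 ≤ s ∧ u ≤ p.2)
      = Multiset.countP (fun y => (u - s) / 2 ≤ y) (vals D₁ ((s + u) / 2)) :=
        (countP_tent hsu).symm
    _ = ((Finset.range N).filter fun j => (u - s) / 2 ≤ landscape D₁ j ((s + u) / 2)).card :=
        (filter_card_eq hw (le_max_left _ _) _).symm
    _ = ((Finset.range N).filter fun j => (u - s) / 2 ≤ landscape D₂ j ((s + u) / 2)).card := by
        congr 1
        refine Finset.filter_congr fun j _ => ?_
        rw [h j ((s + u) / 2)]
    _ = Multiset.countP (fun y => (u - s) / 2 ≤ y) (vals D₂ ((s + u) / 2)) :=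
        filter_card_eq hw (le_max_right _ _) _
    _ = D₂.countP (fun p => p.1 ≤ s ∧ u ≤ p.2) := countP_tent hsu

/-! ### Analytic facts -/

lemma landscape_hcs (D : Multiset (ℝ × ℝ)) (j : ℕ) :
    HasCompactSupport (landscape D j) := by
  obtain ⟨B, E, hBE⟩ := exists_bounds D
  have hsub : Function.support (landscape D j) ⊆ Set.Icc B E := by
    intro t ht
    by_contra hmem
    rw [Set.mem_Icc, not_and_or, not_le, not_le] at hmem
    exact ht (landscape_support hBE j (hmem.imp le_of_lt le_of_lt))
  exact HasCompactSupport.intro isCompact_Icc fun t ht =>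
    Function.notMem_support.1 fun hs => ht (hsub hs)

lemma landscape_memlp (D : Multiset (ℝ × ℝ)) (j : ℕ) :
    MemLp (landscape D j) 2 (volume : Measure ℝ) :=
  (landscape_continuous D j).memLp_of_hasCompactSupport (landscape_hcs D j)

lemma exists_max_death {D : Multiset (ℝ × ℝ)} (hne : D ≠ 0) :
    ∃ p ∈ D, ∀ q ∈ D, q.2 ≤ p.2 := by
  induction D using Multiset.induction_on with
  | empty => exact absurd rfl hne
  | cons a s ih =>
    rcases eq_or_ne s 0 with rfl | hs
    · exact ⟨a, Multiset.mem_cons_self a _, fun q hq => by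
        rw [Multiset.cons_zero, Multiset.mem_singleton] at hq; rw [hq]⟩
    · obtain ⟨p, hp, hmax⟩ := ih hs
      rcases le_total a.2 p.2 with h | h
      · refine ⟨p, Multiset.mem_cons_of_mem hp, fun q hq => ?_⟩
        rcases Multiset.mem_cons.1 hq with rfl | hq'
        · exact h
        · exact hmax q hq'
      · refine ⟨a, Multiset.mem_cons_self a _, fun q hq => ?_⟩
        rcases Multiset.mem_cons.1 hq with rfl | hq'
        · exact le_rfl
        · exact le_trans (hmax q hq') h

lemma slope_witness {D : Multiset (ℝ × ℝ)} (hD : IsDiagram D) (hne : D ≠ 0) :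
    ∃ v m e : ℝ, 0 < v ∧ e - m = v ∧ v ≤ landscape D 0 m ∧ landscape D 0 e = 0 := by
  obtain ⟨p, hp, hmax⟩ := exists_max_death hne
  have hbd := hD p hp
  refine ⟨(p.2 - p.1) / 2, (p.1 + p.2) / 2, p.2, by linarith, by ring, ?_, ?_⟩
  · have h1 : tent p.1 p.2 ((p.1 + p.2) / 2) = (p.2 - p.1) / 2 := by
      unfold tent
      rw [show (p.1 + p.2) / 2 - p.1 = (p.2 - p.1) / 2 by ring,
        show p.2 - (p.1 + p.2) / 2 = (p.2 - p.1) / 2 by ring, min_self,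
        max_eq_right (by linarith)]
    rw [← h1]
    exact tent_le_land0 hp _
  · refine landscape_zero_of_vals D 0 p.2 ?_
    intro x hx
    obtain ⟨q, hq, rfl⟩ := Multiset.mem_map.1 hx
    exact tent_zero_right (hmax q hq)

lemma integral_land0_sq_pos {D : Multiset (ℝ × ℝ)} (hD : IsDiagram D) (hne : D ≠ 0) :
    0 < ∫ t : ℝ, landscape D 0 t * landscape D 0 t := by
  have hcont : Continuous fun t => landscape D 0 t * landscape D 0 t :=
    (landscape_continuous D 0).mul (landscape_continuous D 0)
  have hint : Integrable (fun t => landscape D 0 t * landscape D 0 t) volume :=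
    hcont.integrable_of_hasCompactSupport ((landscape_hcs D 0).mul_left)
  rw [integral_pos_iff_support_of_nonneg (fun t => mul_self_nonneg _) hint]
  have hsupp : Function.support (fun t => landscape D 0 t * landscape D 0 t)
      = Function.support (landscape D 0) := by
    ext t; simp [Function.mem_support, mul_self_eq_zero]
  rw [hsupp]
  obtain ⟨v, m, e, hv, _, hvm, _⟩ := slope_witness hD hne
  refine ((landscape_continuous D 0).isOpen_support).measure_pos volume ⟨m, ?_⟩
  exact Function.mem_support.2 (ne_of_gt (lt_of_lt_of_le hv hvm))

/-! ### The Hilbert space embedding -/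

open scoped InnerProductSpace

def Xvec (D : Multiset (ℝ × ℝ)) (N : ℕ) :
    PiLp 2 (fun _ : Fin N => (ℝ →₂[(volume : Measure ℝ)] ℝ)) :=
  WithLp.toLp 2 fun j => (landscape_memlp D (j : ℕ)).toLp _

lemma inner_coord (D₁ D₂ : Multiset (ℝ × ℝ)) (N : ℕ) (j : Fin N) :
    ⟪Xvec D₁ N j, Xvec D₂ N j⟫_ℝ = ∫ t : ℝ, landscape D₁ (j : ℕ) t * landscape D₂ (j : ℕ) t := by
  rw [MeasureTheory.L2.inner_def]
  refine integral_congr_ae ?_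
  filter_upwards [(landscape_memlp D₁ (j : ℕ)).coeFn_toLp,
    (landscape_memlp D₂ (j : ℕ)).coeFn_toLp] with t h1 h2
  rw [RCLike.inner_apply, conj_trivial]
  show ((landscape_memlp D₂ (j : ℕ)).toLp _ : ℝ →₂[volume] ℝ) t
      * ((landscape_memlp D₁ (j : ℕ)).toLp _ : ℝ →₂[volume] ℝ) t = _
  rw [h1, h2, mul_comm]

lemma tsum_support_zero {D₁ D₂ : Multiset (ℝ × ℝ)} {N : ℕ} (hN₁ : Multiset.card D₁ ≤ N) :
    ∀ j ∉ Finset.range N, (∫ t : ℝ, landscape D₁ j t * landscape D₂ j t) = 0 := by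
  intro j hj
  rw [Finset.mem_range, not_lt] at hj
  have : ∀ t : ℝ, landscape D₁ j t * landscape D₂ j t = 0 := fun t => by
    rw [landscape_eq_zero_of_card t (le_trans hN₁ hj), zero_mul]
  simp only [this, integral_zero]

lemma landInner_repr {D₁ D₂ : Multiset (ℝ × ℝ)} {N : ℕ}
    (hN₁ : Multiset.card D₁ ≤ N) :
    landInner (landscape D₁) (landscape D₂) = ⟪Xvec D₁ N, Xvec D₂ N⟫_ℝ := by
  rw [PiLp.inner_apply]
  unfold landInner
  rw [tsum_eq_sum (tsum_support_zero hN₁), ← Fin.sum_univ_eq_sum_range]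
  exact Finset.sum_congr rfl fun j _ => (inner_coord D₁ D₂ N j).symm

lemma landNorm_repr {D : Multiset (ℝ × ℝ)} {N : ℕ} (hN : Multiset.card D ≤ N) :
    landNorm (landscape D) = ‖Xvec D N‖ := by
  unfold landNorm
  rw [landInner_repr hN, real_inner_self_eq_norm_mul_norm,
    Real.sqrt_mul_self (norm_nonneg _)]

lemma landInner_self_pos {D : Multiset (ℝ × ℝ)} (hD : IsDiagram D) (hne : D ≠ 0) :
    0 < landInner (landscape D) (landscape D) := by
  unfold landInner
  rw [tsum_eq_sum (tsum_support_zero le_rfl)]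
  refine lt_of_lt_of_le (integral_land0_sq_pos hD hne) ?_
  refine Finset.single_le_sum
    (f := fun j => ∫ t : ℝ, landscape D j t * landscape D j t)
    (fun i _ => integral_nonneg fun t => mul_self_nonneg _) ?_
  exact Finset.mem_range.2 (Multiset.card_pos.2 hne)

end LandAux

open LandAux

open scoped InnerProductSpace

theorem cosSim_eq_one_iff
    (D₁ D₂ : Multiset (ℝ × ℝ)) (hD₁ : IsDiagram D₁) (hD₂ : IsDiagram D₂)
    (hne₁ : D₁ ≠ 0) (hne₂ : D₂ ≠ 0) :
    cosSim D₁ D₂ = 1 ↔ D₁ = D₂ := by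
  
  constructor
  · intro h
    set N := max (Multiset.card D₁) (Multiset.card D₂) with hNdef
    have hN₁ : Multiset.card D₁ ≤ N := le_max_left _ _
    have hN₂ : Multiset.card D₂ ≤ N := le_max_right _ _
    have hrepr : cosSim D₁ D₂
        = ⟪Xvec D₁ N, Xvec D₂ N⟫_ℝ / (‖Xvec D₁ N‖ * ‖Xvec D₂ N‖) := by
      unfold cosSim
      rw [landInner_repr hN₁, landNorm_repr hN₁, landNorm_repr hN₂]
    rw [hrepr] at h
    obtain ⟨-, r, hr, hXY⟩ := (real_inner_div_norm_mul_norm_eq_one_iff _ _).1 h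
    have hae : ∀ j : Fin N, landscape D₂ (j : ℕ) =ᵐ[volume]
        fun t => r * landscape D₁ (j : ℕ) t := by
      intro j
      have h1 : Xvec D₂ N j = r • Xvec D₁ N j := by rw [hXY]; rfl
      calc landscape D₂ (j : ℕ)
          =ᵐ[volume] ⇑(Xvec D₂ N j) := ((landscape_memlp D₂ (j : ℕ)).coeFn_toLp).symm
        _ =ᵐ[volume] ⇑(r • Xvec D₁ N j) := by rw [h1]
        _ =ᵐ[volume] r • ⇑(Xvec D₁ N j) := Lp.coeFn_smul _ _
        _ =ᵐ[volume] fun t => r * landscape D₁ (j : ℕ) t := by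
            filter_upwards [(landscape_memlp D₁ (j : ℕ)).coeFn_toLp] with t ht
            show r • (((landscape_memlp D₁ (j : ℕ)).toLp _ : ℝ →₂[volume] ℝ) t)
                = r * landscape D₁ (j : ℕ) t
            rw [ht, smul_eq_mul]
    have hpt : ∀ (j : ℕ) (t : ℝ), landscape D₂ j t = r * landscape D₁ j t := by
      intro j t
      rcases Nat.lt_or_ge j N with hj | hj
      · have hcont2 : Continuous fun t => r * landscape D₁ j t :=
          continuous_const.mul (landscape_continuous D₁ j)
        have := (Continuous.ae_eq_iff_eq volume (landscape_continuous D₂ j) hcont2).1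
          (hae ⟨j, hj⟩)
        exact congrFun this t
      · rw [landscape_eq_zero_of_card t (le_trans hN₂ hj),
          landscape_eq_zero_of_card t (le_trans hN₁ hj), mul_zero]
    -- 1 ≤ r
    obtain ⟨v₂, m₂, e₂, hv₂, hme₂, hvm₂, hze₂⟩ := slope_witness hD₂ hne₂
    have hl1e₂ : landscape D₁ 0 e₂ = 0 := by
      have h0 := hpt 0 e₂
      rw [hze₂] at h0
      rcases mul_eq_zero.1 h0.symm with h' | h'
      · exact absurd h' (ne_of_gt hr)
      · exact h'
    have h1r : 1 ≤ r := by
      have habs : |m₂ - e₂| = v₂ := by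
        rw [abs_sub_comm, abs_of_nonneg (by linarith)]; linarith
      have hv : v₂ ≤ r * landscape D₁ 0 m₂ := by rw [← hpt 0 m₂]; exact hvm₂
      have hlip := le_trans (le_abs_self _) (landscape_lipschitz D₁ 0 m₂ e₂)
      rw [habs, hl1e₂, sub_zero] at hlip
      nlinarith
    -- r ≤ 1
    obtain ⟨v₁, m₁, e₁, hv₁, hme₁, hvm₁, hze₁⟩ := slope_witness hD₁ hne₁
    have hl2e₁ : landscape D₂ 0 e₁ = 0 := by rw [hpt 0 e₁, hze₁, mul_zero]
    have hr1 : r ≤ 1 := by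
      have habs : |m₁ - e₁| = v₁ := by
        rw [abs_sub_comm, abs_of_nonneg (by linarith)]; linarith
      have hv : r * v₁ ≤ landscape D₂ 0 m₁ := by
        rw [hpt 0 m₁]
        exact mul_le_mul_of_nonneg_left hvm₁ hr.le
      have hlip := le_trans (le_abs_self _) (landscape_lipschitz D₂ 0 m₁ e₁)
      rw [habs, hl2e₁, sub_zero] at hlip
      nlinarith
    have hre : r = 1 := le_antisymm hr1 h1r
    refine diagrams_eq_of_landscape hD₁ hD₂ fun j t => ?_
    rw [hpt j t, hre, one_mul]
  · rintro rfl
    have hpos := landInner_self_pos hD₁ hne₁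
    unfold cosSim landNorm
    rw [Real.mul_self_sqrt hpos.le, div_self hpos.ne']
end
end
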